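/- arXiv:2512.01494 — 4 statements merged into one kernel-verified Lean document; each statement's English description precedes it below -/
import Mathlib

section
/- Let p, q be finite ℝ^d-valued Radon measures on ℝ^d such that |p+q| = |p| + |q| as measures. Let g : ℝ^d × ℝ^d → [0,∞] be lower semi-continuous, and for each x, convex and positively 1-homogeneous in the second variable. Then ∫ g(x, d(p+q)/d|p+q|(x)) d|p+q|(x) = ∫ g(x, dp/d|p|(x)) d|p|(x) + ∫ g(x, dq/d|q|(x)) d|q|(x). -/
open MeasureTheory
open scoped ENNReal

lemma unit_combo_eq {E : Type*} [NormedAddCommGroup E] [InnerProductSpace ℝ E]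
    {u v : E} {a b : ℝ} (ha : 0 < a) (hb : 0 < b) (hab : a + b = 1)
    (hu : ‖u‖ = 1) (hv : ‖v‖ = 1) (h : ‖a • u + b • v‖ = 1) : u = v := by
  have hinner : (inner ℝ u v : ℝ) = 1 := by
    have h2 : ‖a • u + b • v‖ ^ 2 = 1 := by rw [h]; norm_num
    rw [norm_add_sq_real, norm_smul, norm_smul, real_inner_smul_left,
      real_inner_smul_right, hu, hv] at h2
    rw [Real.norm_eq_abs, Real.norm_eq_abs, abs_of_pos ha, abs_of_pos hb] at h2
    nlinarith [h2, hab, mul_pos ha hb]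
  exact (inner_eq_one_iff_of_norm_eq_one hu hv).mp hinner

/-- Additivity of the convex 1-homogeneous integral functional under a decomposition with
`|p+q| = |p| + |q|`. Here the vector measure `p` is encoded by its total variation `μp`
together with its unit polar density `ρp` (and similarly for `q` and `p+q`, the latter having
total variation `μp + μq` and unit density `ρ`). Then
`∫ g(x, d(p+q)/d|p+q|) d|p+q| = ∫ g(x, dp/d|p|) d|p| + ∫ g(x, dq/d|q|) d|q|`. -/
theorem stmt1 {d : ℕ}
    (g : EuclideanSpace ℝ (Fin d) → EuclideanSpace ℝ (Fin d) → ENNReal)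
    (hlsc : LowerSemicontinuous
      (fun p : EuclideanSpace ℝ (Fin d) × EuclideanSpace ℝ (Fin d) => g p.1 p.2))
    (hconv : ∀ x p q : EuclideanSpace ℝ (Fin d), ∀ a b : ℝ, 0 ≤ a → 0 ≤ b → a + b = 1 →
      g x (a • p + b • q) ≤ ENNReal.ofReal a * g x p + ENNReal.ofReal b * g x q)
    (hhom : ∀ (x : EuclideanSpace ℝ (Fin d)) (lam : ℝ), 0 < lam → ∀ t,
      g x (lam • t) = ENNReal.ofReal lam * g x t)
    (hzero : ∀ x, g x 0 = 0)
    (μp μq : Measure (EuclideanSpace ℝ (Fin d)))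
    [IsFiniteMeasure μp] [IsFiniteMeasure μq]
    (ρp ρq ρ : EuclideanSpace ℝ (Fin d) → EuclideanSpace ℝ (Fin d))
    (hρpm : Measurable ρp) (hρqm : Measurable ρq) (hρm : Measurable ρ)
    (hρp : ∀ᵐ x ∂μp, ‖ρp x‖ = 1) (hρq : ∀ᵐ x ∂μq, ‖ρq x‖ = 1)
    (hρ : ∀ᵐ x ∂(μp + μq), ‖ρ x‖ = 1)
    (hsum : ∀ E : Set (EuclideanSpace ℝ (Fin d)), MeasurableSet E →
      ∫ x in E, ρ x ∂(μp + μq) = (∫ x in E, ρp x ∂μp) + ∫ x in E, ρq x ∂μq) :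
    ∫⁻ x, g x (ρ x) ∂(μp + μq) =
      (∫⁻ x, g x (ρp x) ∂μp) + ∫⁻ x, g x (ρq x) ∂μq := by
  set ν := μp + μq with hν
  haveI : IsFiniteMeasure ν := inferInstanceAs (IsFiniteMeasure (μp + μq))
  haveI : μp.HaveLebesgueDecomposition ν := Measure.haveLebesgueDecomposition_of_sigmaFinite μp ν
  haveI : μq.HaveLebesgueDecomposition ν := Measure.haveLebesgueDecomposition_of_sigmaFinite μq ν
  have hpν : μp ≪ ν := Measure.absolutelyContinuous_of_le (Measure.le_add_right le_rfl)
  have hqν : μq ≪ ν := Measure.absolutelyContinuous_of_le (Measure.le_add_left le_rfl)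
  set fp := μp.rnDeriv ν with hfp_def
  set fq := μq.rnDeriv ν with hfq_def
  have hfpm : Measurable fp := Measure.measurable_rnDeriv _ _
  have hfqm : Measurable fq := Measure.measurable_rnDeriv _ _
  have hμp : ν.withDensity fp = μp := Measure.withDensity_rnDeriv_eq _ _ hpν
  have hμq : ν.withDensity fq = μq := Measure.withDensity_rnDeriv_eq _ _ hqν
  -- fp + fq = 1 ν-a.e.
  have hsum1 : ∀ᵐ x ∂ν, fp x + fq x = 1 := by
    have h1 := Measure.rnDeriv_add' μp μq ν
    have h2 := Measure.rnDeriv_self ν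
    rw [← hν] at h1
    filter_upwards [h1, h2] with x h1 h2
    rw [← hfp_def, ← hfq_def] at h1
    calc fp x + fq x = (μp.rnDeriv ν + μq.rnDeriv ν) x := rfl
      _ = ν.rnDeriv ν x := h1.symm
      _ = 1 := h2
  have hfp_top : ∀ᵐ x ∂ν, fp x ≠ ∞ := by
    filter_upwards [hsum1] with x hx
    intro h; simp [h] at hx
  have hfq_top : ∀ᵐ x ∂ν, fq x ≠ ∞ := by
    filter_upwards [hsum1] with x hx
    intro h; simp [h] at hx
  -- withDensity with NNReal versions
  set fp' : EuclideanSpace ℝ (Fin d) → NNReal := fun x => (fp x).toNNReal with hfp'_def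
  set fq' : EuclideanSpace ℝ (Fin d) → NNReal := fun x => (fq x).toNNReal with hfq'_def
  have hfp'm : Measurable fp' := hfpm.ennreal_toNNReal
  have hfq'm : Measurable fq' := hfqm.ennreal_toNNReal
  have hμp' : ν.withDensity (fun x => (fp' x : ENNReal)) = μp := by
    rw [← hμp]
    apply withDensity_congr_ae
    filter_upwards [hfp_top] with x hx
    simp [hfp'_def, ENNReal.coe_toNNReal hx]
  have hμq' : ν.withDensity (fun x => (fq' x : ENNReal)) = μq := by
    rw [← hμq]
    apply withDensity_congr_ae
    filter_upwards [hfq_top] with x hx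
    simp [hfq'_def, ENNReal.coe_toNNReal hx]
  -- a.e. unit norm of ρp where fp ≠ 0
  have hp1 : ∀ᵐ x ∂ν, fp x ≠ 0 → ‖ρp x‖ = 1 := by
    rw [← ae_withDensity_iff hfpm, hμp]; exact hρp
  have hq1 : ∀ᵐ x ∂ν, fq x ≠ 0 → ‖ρq x‖ = 1 := by
    rw [← ae_withDensity_iff hfqm, hμq]; exact hρq
  -- Integrability
  have hρ_int : Integrable ρ ν :=
    ⟨hρm.aestronglyMeasurable, HasFiniteIntegral.of_bounded (C := 1)
      (by filter_upwards [hρ] with x hx; rw [hx])⟩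
  set F : EuclideanSpace ℝ (Fin d) → EuclideanSpace ℝ (Fin d) :=
    fun x => (fp x).toReal • ρp x + (fq x).toReal • ρq x with hF_def
  have hb1 : ∀ᵐ x ∂ν, ‖(fp x).toReal • ρp x‖ ≤ (fp x).toReal := by
    filter_upwards [hp1] with x hp
    rcases eq_or_ne (fp x) 0 with h | h
    · simp [h]
    · rw [norm_smul, Real.norm_eq_abs, abs_of_nonneg ENNReal.toReal_nonneg, hp h, mul_one]
  have hb2 : ∀ᵐ x ∂ν, ‖(fq x).toReal • ρq x‖ ≤ (fq x).toReal := by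
    filter_upwards [hq1] with x hq
    rcases eq_or_ne (fq x) 0 with h | h
    · simp [h]
    · rw [norm_smul, Real.norm_eq_abs, abs_of_nonneg ENNReal.toReal_nonneg, hq h, mul_one]
  have habs : ∀ᵐ x ∂ν, (fp x).toReal + (fq x).toReal = 1 := by
    filter_upwards [hsum1, hfp_top, hfq_top] with x hx hpt hqt
    rw [← ENNReal.toReal_add hpt hqt, hx]; simp
  have hG1_int : Integrable (fun x => (fp x).toReal • ρp x) ν := by
    refine ⟨(hfpm.ennreal_toReal.smul hρpm).aestronglyMeasurable,
      HasFiniteIntegral.of_bounded (C := 1) ?_⟩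
    filter_upwards [hb1, habs] with x h1 h3
    have : (fp x).toReal ≤ 1 := by
      have := ENNReal.toReal_nonneg (a := fq x); linarith
    linarith
  have hG2_int : Integrable (fun x => (fq x).toReal • ρq x) ν := by
    refine ⟨(hfqm.ennreal_toReal.smul hρqm).aestronglyMeasurable,
      HasFiniteIntegral.of_bounded (C := 1) ?_⟩
    filter_upwards [hb2, habs] with x h2 h3
    have : (fq x).toReal ≤ 1 := by
      have := ENNReal.toReal_nonneg (a := fp x); linarith
    linarith
  have hF_int : Integrable F ν := hG1_int.add hG2_int
  -- set-integral identity: ∫_E ρ dν = ∫_E F dν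
  have hset : ∀ E : Set (EuclideanSpace ℝ (Fin d)), MeasurableSet E →
      ∫ x in E, ρ x ∂ν = ∫ x in E, F x ∂ν := by
    intro E hE
    have hp_eq : ∫ x in E, ρp x ∂μp = ∫ x in E, (fp x).toReal • ρp x ∂ν := by
      rw [← hμp', restrict_withDensity hE,
        integral_withDensity_eq_integral_smul hfp'm]
      simp only [NNReal.smul_def]
      rfl
    have hq_eq : ∫ x in E, ρq x ∂μq = ∫ x in E, (fq x).toReal • ρq x ∂ν := by
      rw [← hμq', restrict_withDensity hE,
        integral_withDensity_eq_integral_smul hfq'm]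
      simp only [NNReal.smul_def]
      rfl
    rw [hsum E hE, hp_eq, hq_eq, hF_def,
      integral_add hG1_int.integrableOn hG2_int.integrableOn]
  have hρF : ρ =ᵐ[ν] F :=
    Integrable.ae_eq_of_forall_setIntegral_eq ρ F hρ_int hF_int
      (fun s hs _ => hset s hs)
  -- Pointwise identification
  have hAp : ∀ᵐ x ∂ν, fp x ≠ 0 → ρ x = ρp x := by
    filter_upwards [hρF, hρ, habs, hp1, hq1, hfp_top, hfq_top]
      with x hFx hρx hab hp hq hpt hqt hne
    have ha : 0 < (fp x).toReal := ENNReal.toReal_pos hne hpt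
    rcases eq_or_ne (fq x) 0 with h | h
    · have ha1 : (fp x).toReal = 1 := by simp [h] at hab; linarith
      rw [hFx]; simp only [hF_def]
      rw [ha1]; simp [h]
    · have hb : 0 < (fq x).toReal := ENNReal.toReal_pos h hqt
      have hnn : ‖(fp x).toReal • ρp x + (fq x).toReal • ρq x‖ = 1 := by
        rw [show (fp x).toReal • ρp x + (fq x).toReal • ρq x = F x from rfl, ← hFx]; exact hρx
      have huv : ρp x = ρq x :=
        unit_combo_eq ha hb hab (hp hne) (hq h) hnn
      rw [hFx]; simp only [hF_def]
      rw [← huv, ← add_smul, hab, one_smul]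
  have hAq : ∀ᵐ x ∂ν, fq x ≠ 0 → ρ x = ρq x := by
    filter_upwards [hρF, hρ, habs, hp1, hq1, hfp_top, hfq_top]
      with x hFx hρx hab hp hq hpt hqt hne
    have hb : 0 < (fq x).toReal := ENNReal.toReal_pos hne hqt
    rcases eq_or_ne (fp x) 0 with h | h
    · have hb1 : (fq x).toReal = 1 := by simp [h] at hab; linarith
      rw [hFx]; simp only [hF_def]
      rw [hb1]; simp [h]
    · have ha : 0 < (fp x).toReal := ENNReal.toReal_pos h hpt
      have hnn : ‖(fp x).toReal • ρp x + (fq x).toReal • ρq x‖ = 1 := by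
        rw [show (fp x).toReal • ρp x + (fq x).toReal • ρq x = F x from rfl, ← hFx]; exact hρx
      have huv : ρp x = ρq x :=
        unit_combo_eq ha hb hab (hp h) (hq hne) hnn
      rw [hFx]; simp only [hF_def]
      rw [huv, ← add_smul, hab, one_smul]
  have hρρp : ρ =ᵐ[μp] ρp := by
    filter_upwards [hpν.ae_le hAp, Measure.rnDeriv_pos hpν] with x h hx
    exact h hx.ne'
  have hρρq : ρ =ᵐ[μq] ρq := by
    filter_upwards [hqν.ae_le hAq, Measure.rnDeriv_pos hqν] with x h hx
    exact h hx.ne'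
  rw [hν, lintegral_add_measure]
  congr 1
  · exact lintegral_congr_ae (by filter_upwards [hρρp] with x h; rw [h])
  · exact lintegral_congr_ae (by filter_upwards [hρρq] with x h; rw [h])
end

section
/- Let p, q be finite ℝ^d-valued Radon measures with |p+q| = |p| + |q|. Then for |p+q|-a.e. x there exists α(x) ∈ [0,1] such that dp/d|p+q|(x) = α(x) · d(p+q)/d|p+q|(x) and dq/d|p+q|(x) = (1−α(x)) · d(p+q)/d|p+q|(x). -/
open MeasureTheory

/-- If `|p+q| = |p| + |q|`, then for `|p+q|`-a.e. `x` there is `α(x) ∈ [0,1]` with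
`dp/d|p+q|(x) = α(x) · d(p+q)/d|p+q|(x)` and `dq/d|p+q|(x) = (1-α(x)) · d(p+q)/d|p+q|(x)`.
Here `p` is encoded by its total variation `μp` and unit polar density `ρp` (similarly `q`),
`|p+q| = μp + μq`, `ρ` is the unit density of `p+q`, and the densities of `p`, `q` with
respect to `|p+q|` are `(dμp/d(μp+μq))·ρp` and `(dμq/d(μp+μq))·ρq`. -/
theorem stmt2 {d : ℕ}
    (μp μq : Measure (EuclideanSpace ℝ (Fin d)))
    [IsFiniteMeasure μp] [IsFiniteMeasure μq]
    (ρp ρq ρ : EuclideanSpace ℝ (Fin d) → EuclideanSpace ℝ (Fin d))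
    (hρpm : Measurable ρp) (hρqm : Measurable ρq) (hρm : Measurable ρ)
    (hρp : ∀ᵐ x ∂μp, ‖ρp x‖ = 1) (hρq : ∀ᵐ x ∂μq, ‖ρq x‖ = 1)
    (hρ : ∀ᵐ x ∂(μp + μq), ‖ρ x‖ = 1)
    (hsum : ∀ E : Set (EuclideanSpace ℝ (Fin d)), MeasurableSet E →
      ∫ x in E, ρ x ∂(μp + μq) = (∫ x in E, ρp x ∂μp) + ∫ x in E, ρq x ∂μq) :
    ∀ᵐ x ∂(μp + μq), ∃ α : ℝ, α ∈ Set.Icc (0 : ℝ) 1 ∧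
      (μp.rnDeriv (μp + μq) x).toReal • ρp x = α • ρ x ∧
      (μq.rnDeriv (μp + μq) x).toReal • ρq x = (1 - α) • ρ x := by
  set μ := μp + μq with hμ
  haveI : IsFiniteMeasure μ := inferInstanceAs (IsFiniteMeasure (μp + μq))
  haveI : SigmaFinite μ := inferInstance
  have hpac : μp ≪ μ := (Measure.le_add_right le_rfl).absolutelyContinuous
  have hqac : μq ≪ μ := (Measure.le_add_left le_rfl).absolutelyContinuous
  -- integrability of ρp, ρq, ρ
  have hρp_int : Integrable ρp μp := by
    refine Integrable.mono' (integrable_const 1) hρpm.aestronglyMeasurable ?_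
    filter_upwards [hρp] with x hx using le_of_eq hx
  have hρq_int : Integrable ρq μq := by
    refine Integrable.mono' (integrable_const 1) hρqm.aestronglyMeasurable ?_
    filter_upwards [hρq] with x hx using le_of_eq hx
  have hρ_int : Integrable ρ μ := by
    refine Integrable.mono' (integrable_const 1) hρm.aestronglyMeasurable ?_
    filter_upwards [hρ] with x hx using le_of_eq hx
  have hfp_int : Integrable (fun x => (μp.rnDeriv μ x).toReal • ρp x) μ :=
    (integrable_rnDeriv_smul_iff hpac).mpr hρp_int
  have hfq_int : Integrable (fun x => (μq.rnDeriv μ x).toReal • ρq x) μ :=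
    (integrable_rnDeriv_smul_iff hqac).mpr hρq_int
  -- density identity
  have hdens : (fun x => (μp.rnDeriv μ x).toReal • ρp x + (μq.rnDeriv μ x).toReal • ρq x)
      =ᵐ[μ] ρ := by
    refine ae_eq_of_forall_setIntegral_eq_of_sigmaFinite
      (fun s hs _ => (hfp_int.add hfq_int).integrableOn)
      (fun s hs _ => hρ_int.integrableOn) ?_
    intro s hs _
    rw [integral_add hfp_int.integrableOn hfq_int.integrableOn,
      setIntegral_rnDeriv_smul hpac hs, setIntegral_rnDeriv_smul hqac hs,
      hsum s hs]
  -- sum of derivatives is 1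
  have hab : ∀ᵐ x ∂μ, (μp.rnDeriv μ x).toReal + (μq.rnDeriv μ x).toReal = 1 := by
    have h1 : μ.rnDeriv μ =ᵐ[μ] 1 := Measure.rnDeriv_self μ
    have h2 : (μp + μq).rnDeriv μ =ᵐ[μ] μp.rnDeriv μ + μq.rnDeriv μ :=
      Measure.rnDeriv_add μp μq μ
    filter_upwards [h1, h2.symm, Measure.rnDeriv_lt_top μp μ, Measure.rnDeriv_lt_top μq μ]
      with x h1x h2x hpx hqx
    have : μp.rnDeriv μ x + μq.rnDeriv μ x = 1 := by
      rw [← Pi.add_apply, h2x, ← hμ, h1x]; rfl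
    rw [← ENNReal.toReal_add hpx.ne hqx.ne, this, ENNReal.toReal_one]
  -- a.e. either the unit vector has norm 1 or the derivative vanishes
  have key : ∀ (ν : Measure (EuclideanSpace ℝ (Fin d))) (_ : IsFiniteMeasure ν) (_ : ν ≪ μ)
      (g : EuclideanSpace ℝ (Fin d) → EuclideanSpace ℝ (Fin d)) (_ : Measurable g)
      (_ : ∀ᵐ x ∂ν, ‖g x‖ = 1), ∀ᵐ x ∂μ, ‖g x‖ = 1 ∨ (ν.rnDeriv μ x).toReal = 0 := by
    intro ν hfin hac g hgm hg
    set N := {x | ¬ ‖g x‖ = 1} with hN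
    have hNm : MeasurableSet N := (measurableSet_eq_fun (hgm.norm) measurable_const).compl
    have hνN : ν N = 0 := by
      simpa [hN, ae_iff] using hg
    have h0 : ∫⁻ x in N, ν.rnDeriv μ x ∂μ = 0 := by
      rw [Measure.setLIntegral_rnDeriv hac N, hνN]
    have h0'' : ∀ᵐ x ∂μ, x ∈ N → ν.rnDeriv μ x = 0 :=
      (setLIntegral_eq_zero_iff hNm (Measure.measurable_rnDeriv ν μ)).mp h0
    filter_upwards [h0''] with x hx
    by_cases h : ‖g x‖ = 1
    · exact Or.inl h
    · exact Or.inr (by rw [hx h]; simp)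
  have keyp := key μp inferInstance hpac ρp hρpm hρp
  have keyq := key μq inferInstance hqac ρq hρqm hρq
  filter_upwards [hdens, hab, hρ, keyp, keyq] with x hdx habx hρx hpx hqx
  set a := (μp.rnDeriv μ x).toReal with ha
  set b := (μq.rnDeriv μ x).toReal with hb
  have ha0 : 0 ≤ a := ENNReal.toReal_nonneg
  have hb0 : 0 ≤ b := ENNReal.toReal_nonneg
  set u := a • ρp x with hu
  set v := b • ρq x with hv
  have hnu : ‖u‖ = a := by
    rcases hpx with h | h
    · rw [hu, norm_smul, h, mul_one, Real.norm_eq_abs, abs_of_nonneg ha0]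
    · rw [hu, ← ha] at *; rw [h]; simp
  have hnv : ‖v‖ = b := by
    rcases hqx with h | h
    · rw [hv, norm_smul, h, mul_one, Real.norm_eq_abs, abs_of_nonneg hb0]
    · rw [hv, ← hb] at *; rw [h]; simp
  have huv : u + v = ρ x := hdx
  have hray : SameRay ℝ u v := by
    rw [sameRay_iff_norm_add, huv, hρx, hnu, hnv, habx]
  obtain ⟨α, β, hα0, hβ0, hαβ, hu', hv'⟩ := hray.exists_eq_smul_add
  rw [huv] at hu' hv'
  refine ⟨α, ⟨hα0, by linarith⟩, hu', ?_⟩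
  have : β = 1 - α := by linarith
  rw [← this]
  exact hv'
end

section
/- Let f₂(t) = √(1 + α²t²) with α > 0. Then its convex conjugate satisfies f₂*(b) = −√(1 − b²/α²) for |b| ≤ α and f₂*(b) = +∞ for |b| > α. Consequently the set {(a,b) ∈ ℝ² : f₂*(b) + a ≤ 0} equals {(a,b) : max(0,a)² + (b/α)² ≤ 1}. -/
/-- For `f₂(t) = √(1 + α²t²)` with `α > 0`, the convex conjugate satisfies
`f₂*(b) = -√(1 - b²/α²)` for `|b| ≤ α` and `+∞` for `|b| > α`; consequently
`{(a,b) : f₂*(b) + a ≤ 0} = {(a,b) : max(0,a)² + (b/α)² ≤ 1}`. -/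
theorem stmt7 (α : ℝ) (hα : 0 < α) (f : ℝ → ℝ)
    (hf : ∀ t, f t = Real.sqrt (1 + α ^ 2 * t ^ 2))
    (fstar : ℝ → EReal)
    (hfstar : ∀ b : ℝ, fstar b = ⨆ t : ℝ, ((b * t - f t : ℝ) : EReal)) :
    (∀ b : ℝ, |b| ≤ α → fstar b = ((-Real.sqrt (1 - b ^ 2 / α ^ 2) : ℝ) : EReal)) ∧
    (∀ b : ℝ, α < |b| → fstar b = ⊤) ∧
    {p : ℝ × ℝ | fstar p.2 + (p.1 : EReal) ≤ 0} =
      {p : ℝ × ℝ | (max 0 p.1) ^ 2 + (p.2 / α) ^ 2 ≤ 1} := by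
  have hα2 : (0:ℝ) < α ^ 2 := by positivity
  -- the pointwise upper bound
  have key_le : ∀ b : ℝ, |b| ≤ α → ∀ t : ℝ,
      b * t - f t ≤ -Real.sqrt (1 - b ^ 2 / α ^ 2) := by
    intro b hb t
    rw [hf]
    have hb2 : b ^ 2 ≤ α ^ 2 := by
      have h1 := abs_le.mp hb
      nlinarith [h1.1, h1.2]
    set u := Real.sqrt (α ^ 2 - b ^ 2) with hu
    have hu0 : 0 ≤ u := Real.sqrt_nonneg _
    have hu2 : u ^ 2 = α ^ 2 - b ^ 2 := Real.sq_sqrt (by linarith)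
    have hsu : Real.sqrt (1 - b ^ 2 / α ^ 2) = u / α := by
      rw [show (1 - b ^ 2 / α ^ 2) = (α ^ 2 - b ^ 2) / α ^ 2 by field_simp,
        Real.sqrt_div (by linarith), Real.sqrt_sq hα.le]
    set R := Real.sqrt (1 + α ^ 2 * t ^ 2) with hR
    have hR0 : 0 ≤ R := Real.sqrt_nonneg _
    have hR2 : R ^ 2 = 1 + α ^ 2 * t ^ 2 := Real.sq_sqrt (by positivity)
    have hsq : (α * (b * t) + u) ^ 2 ≤ (α * R) ^ 2 := by
      nlinarith [sq_nonneg (α * u * t - b), hu2, hR2]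
    have hle : α * (b * t) + u ≤ α * R :=
      le_of_pow_le_pow_left₀ two_ne_zero (by positivity) hsq
    rw [hsu, ← neg_div, le_div_iff₀ hα]
    nlinarith [hle]
  -- part 1
  have h1 : ∀ b : ℝ, |b| ≤ α →
      fstar b = ((-Real.sqrt (1 - b ^ 2 / α ^ 2) : ℝ) : EReal) := by
    intro b hb
    have hb2 : b ^ 2 ≤ α ^ 2 := by
      have h1 := abs_le.mp hb
      nlinarith [h1.1, h1.2]
    rw [hfstar]
    apply le_antisymm
    · exact iSup_le fun t => EReal.coe_le_coe_iff.mpr (key_le b hb t)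
    · rcases eq_or_lt_of_le hb2 with heq | hlt
      · -- |b| = α : sup is 0, approached but not attained
        have hs : Real.sqrt (1 - b ^ 2 / α ^ 2) = 0 := by
          rw [heq, div_self hα2.ne']
          simp
        rw [hs]
        rw [le_iSup_iff]
        intro c hc
        induction c using EReal.rec with
        | bot => exact absurd (hc 0) (by simp)
        | top => exact le_top
        | coe r =>
          simp only [neg_zero, EReal.coe_zero]
          rw [show (0 : EReal) = ((0 : ℝ) : EReal) from rfl, EReal.coe_le_coe_iff]
          by_contra hr
          push_neg at hr
          set t : ℝ := b * (1 / (2 * α ^ 2 * (-r))) with ht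
          have hterm := hc t
          rw [EReal.coe_le_coe_iff] at hterm
          rw [hf] at hterm
          have hr0 : r ≠ 0 := ne_of_lt hr
          have hbt : b * t = 1 / (2 * (-r)) := by
            rw [ht]
            field_simp
            linear_combination (-1) * heq
          have hbtpos : 0 < b * t := by
            rw [hbt]; exact div_pos one_pos (by linarith)
          have ht2 : α ^ 2 * t ^ 2 = (b * t) ^ 2 := by
            rw [ht]
            field_simp
            linear_combination (-(b ^ 2)) * heq
          have hR : Real.sqrt (1 + α ^ 2 * t ^ 2) < b * t - r := by
            have hw : (b * t) * (2 * (-r)) = 1 := by rw [hbt]; field_simp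
            have hr2 : 0 < r ^ 2 := by positivity
            rw [Real.sqrt_lt' (by linarith), ht2]
            nlinarith [hw, hr2]
          linarith
      · -- |b| < α : sup is attained
        set u := Real.sqrt (α ^ 2 - b ^ 2) with hu
        have hu0 : 0 < u := Real.sqrt_pos.mpr (by linarith)
        have hu2 : u ^ 2 = α ^ 2 - b ^ 2 := Real.sq_sqrt (by linarith)
        have hsu : Real.sqrt (1 - b ^ 2 / α ^ 2) = u / α := by
          rw [show (1 - b ^ 2 / α ^ 2) = (α ^ 2 - b ^ 2) / α ^ 2 by field_simp,
            Real.sqrt_div (by linarith), Real.sqrt_sq hα.le]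
        set t : ℝ := b / (α * u) with ht
        have hft : f t = α / u := by
          rw [hf]
          have : 1 + α ^ 2 * t ^ 2 = (α / u) ^ 2 := by
            rw [ht]; field_simp; linear_combination hu2
          rw [this, Real.sqrt_sq (by positivity)]
        have hval : b * t - f t = -Real.sqrt (1 - b ^ 2 / α ^ 2) := by
          rw [hft, hsu, ht]
          field_simp
          linear_combination hu2
        calc ((-Real.sqrt (1 - b ^ 2 / α ^ 2) : ℝ) : EReal)
            = ((b * t - f t : ℝ) : EReal) := by rw [hval]
          _ ≤ ⨆ t : ℝ, ((b * t - f t : ℝ) : EReal) :=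
              le_iSup (fun t : ℝ => ((b * t - f t : ℝ) : EReal)) t
  -- part 2
  have h2 : ∀ b : ℝ, α < |b| → fstar b = ⊤ := by
    intro b hb
    have hb0 : 0 < |b| := lt_trans hα hb
    rw [hfstar, iSup_eq_top]
    intro c hc
    induction c using EReal.rec with
    | bot => exact ⟨0, EReal.bot_lt_coe _⟩
    | top => exact absurd hc (lt_irrefl _)
    | coe r =>
      set v : ℝ := max 1 (r + 2) / ( |b| * ( |b| - α)) with hv
      have hv0 : 0 < v := by
        apply div_pos (lt_of_lt_of_le one_pos (le_max_left _ _))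
        exact mul_pos hb0 (by linarith)
      refine ⟨b * v, ?_⟩
      rw [hf, EReal.coe_lt_coe_iff]
      have hb2 : b * (b * v) = |b| * ( |b| * v) := by
        rcases abs_cases b with ⟨h, _⟩ | ⟨h, _⟩ <;> rw [h] <;> ring
      have hw0 : (0:ℝ) ≤ α * ( |b| * v) := by positivity
      have habs2 : (b * v) ^ 2 = ( |b| * v) ^ 2 := by
        rw [mul_pow, mul_pow, sq_abs]
      have hsqle : Real.sqrt (1 + α ^ 2 * (b * v) ^ 2) ≤ 1 + α * ( |b| * v) := by
        have h1 : Real.sqrt (1 + α ^ 2 * (b * v) ^ 2)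
            ≤ Real.sqrt ((1 + α * ( |b| * v)) ^ 2) := by
          apply Real.sqrt_le_sqrt
          nlinarith [habs2, hw0]
        rwa [Real.sqrt_sq (by positivity)] at h1
      have hne1 : (|b| : ℝ) ≠ 0 := hb0.ne'
      have hne2 : |b| - α ≠ 0 := ne_of_gt (by linarith)
      have hkey : |b| * v * ( |b| - α) = max 1 (r + 2) := by
        rw [hv]; field_simp
      nlinarith [hsqle, hb2, hkey, le_max_right 1 (r + 2)]
  refine ⟨h1, h2, ?_⟩
  -- part 3
  ext ⟨a, b⟩
  simp only [Set.mem_setOf_eq]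
  rcases le_or_gt (|b|) α with hb | hb
  · have hb2 : b ^ 2 ≤ α ^ 2 := by
      have h := abs_le.mp hb
      nlinarith [h.1, h.2]
    rw [h1 b hb]
    set s := Real.sqrt (1 - b ^ 2 / α ^ 2) with hs
    have hs0 : 0 ≤ s := Real.sqrt_nonneg _
    have hs2 : s ^ 2 = 1 - b ^ 2 / α ^ 2 := by
      apply Real.sq_sqrt
      rw [sub_nonneg, div_le_one hα2]; exact hb2
    have hlhs : (((-s : ℝ) : EReal) + (a : EReal) ≤ 0) ↔ a ≤ s := by
      rw [← EReal.coe_add, ← EReal.coe_zero, EReal.coe_le_coe_iff]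
      constructor <;> intro h <;> linarith
    rw [hlhs]
    have hdiv : (b / α) ^ 2 = b ^ 2 / α ^ 2 := by rw [div_pow]
    constructor
    · intro h
      have hm : max 0 a ≤ s := max_le hs0 h
      have hm0 : 0 ≤ max 0 a := le_max_left _ _
      rw [hdiv]
      nlinarith [hm, hm0, hs2]
    · intro h
      rw [hdiv] at h
      have hm0 : 0 ≤ max 0 a := le_max_left _ _
      have hm : max 0 a ≤ s := by nlinarith [sq_nonneg (max 0 a), hs2]
      exact le_trans (le_max_right 0 a) hm
  · rw [h2 b hb]
    have hb2 : α ^ 2 < b ^ 2 := by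
      nlinarith [abs_nonneg b, sq_abs b]
    constructor
    · intro h
      exfalso
      rw [EReal.top_add_coe] at h
      exact absurd h (by simp)
    · intro h
      exfalso
      have h1 : 1 < (b / α) ^ 2 := by
        rw [div_pow, lt_div_iff₀ hα2]; linarith
      nlinarith [sq_nonneg (max 0 a)]
end

section
/- Let γ : [a,b] → ℝ^d be an injective Lipschitz curve with |γ'(t)| = 1 for a.e. t. Then the induced vector measure z_γ satisfies |z_γ| = H¹ ⌞ (Im γ), the 1-dimensional Hausdorff measure restricted to the image of γ, and z_γ = τ · H¹ ⌞ (Im γ) where τ(γ(t)) = γ'(t) is the unit tangent. -/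
open MeasureTheory RealInnerProductSpace
open Set Filter Topology
open scoped ENNReal NNReal Classical

section Aux
lemma clampLip (a b : ℝ) : LipschitzWith 1 (fun t => max a (min t b)) := by
  apply LipschitzWith.of_dist_le_mul
  intro x y
  simp only [Real.dist_eq, NNReal.coe_one, one_mul]
  calc |max a (min x b) - max a (min y b)| ≤ |min x b - min y b| := by
        rw [max_comm a, max_comm a]; exact abs_max_sub_max_le_abs _ _ _
    _ ≤ max |x - y| |b - b| := abs_min_sub_min_le_max _ _ _ _
    _ = |x - y| := by simp

lemma clampMem {a b : ℝ} (hab : a ≤ b) (t : ℝ) : max a (min t b) ∈ Icc a b :=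
  ⟨le_max_left _ _, max_le hab (min_le_right _ _)⟩

lemma clampEq {a b t : ℝ} (ht : t ∈ Icc a b) : max a (min t b) = t := by
  rw [min_eq_left ht.2, max_eq_right ht.1]

/-- For a continuous monotone function `G` with a.e. derivative `G'` on `(s,t)`,
the integral of `G'` is at most the increment `G t - G s`. -/
lemma lemA {G G' : ℝ → ℝ} {s t : ℝ} (hst : s ≤ t) (hm : Monotone G) (hc : Continuous G)
    (hd : ∀ᵐ x, x ∈ Set.Ioo s t → HasDerivAt G (G' x) x) :
    ∫ x in s..t, G' x ≤ G t - G s := by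
  set ν := hm.stieltjesFunction.measure with hν
  have hGeq : ∀ x, hm.stieltjesFunction x = G x := by
    intro x
    rw [hm.stieltjesFunction_eq]
    exact rightLim_eq_of_tendsto
      ((hc.tendsto x).mono_left nhdsWithin_le_nhds)
  have hD : ∀ᵐ x, HasDerivAt G (ν.rnDeriv volume x).toReal x := hm.ae_hasDerivAt
  have hcongr : ∀ᵐ x ∂(volume.restrict (Ioc s t)), G' x = (ν.rnDeriv volume x).toReal := by
    rw [← Measure.restrict_congr_set Ioo_ae_eq_Ioc]
    rw [ae_restrict_iff' measurableSet_Ioo]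
    filter_upwards [hd, hD] with x hx hDx hmem
    exact (hx hmem).unique hDx
  have h1 : ∫ x in s..t, G' x = ∫ x in Ioc s t, (ν.rnDeriv volume x).toReal := by
    rw [intervalIntegral.integral_of_le hst]
    exact integral_congr_ae hcongr
  have h2 : ∫ x in Ioc s t, (ν.rnDeriv volume x).toReal =
      (∫⁻ x in Ioc s t, ν.rnDeriv volume x).toReal := by
    apply integral_toReal (ν.measurable_rnDeriv volume).aemeasurable
    exact ae_restrict_of_ae (ν.rnDeriv_lt_top volume)
  have h3 : (∫⁻ x in Ioc s t, ν.rnDeriv volume x) ≤ ν (Ioc s t) :=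
    Measure.setLIntegral_rnDeriv_le _
  have h4 : ν (Ioc s t) = ENNReal.ofReal (G t - G s) := by
    rw [hν, StieltjesFunction.measure_Ioc, hGeq, hGeq]
  rw [h1, h2]
  calc (∫⁻ x in Ioc s t, ν.rnDeriv volume x).toReal ≤ (ν (Ioc s t)).toReal := by
        apply ENNReal.toReal_mono _ h3
        rw [h4]; exact ENNReal.ofReal_ne_top
    _ ≤ G t - G s := by rw [h4, ENNReal.toReal_ofReal (sub_nonneg.2 (hm hst))]

variable {d : ℕ} {a b : ℝ} {γ γ' : ℝ → EuclideanSpace ℝ (Fin d)} {K : NNReal}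

lemma gammaLip (hab : a ≤ b) (hlip : LipschitzOnWith K γ (Set.Icc a b)) :
    LipschitzWith K (γ ∘ (fun r => max a (min r b))) := by
  rw [← lipschitzOnWith_univ]
  have := hlip.comp ((clampLip a b).lipschitzOnWith (s := Set.univ))
    (fun x _ => clampMem hab x)
  simpa using this

lemma oneLip (hab : a ≤ b) (hlip : LipschitzOnWith K γ (Set.Icc a b))
    (hderiv : ∀ᵐ t ∂(volume.restrict (Set.Icc a b)),
      HasDerivAt γ (γ' t) t ∧ ‖γ' t‖ = 1) :
    ∀ s ∈ Icc a b, ∀ t ∈ Icc a b, s ≤ t → ‖γ t - γ s‖ ≤ t - s := by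
  set Γ : ℝ → EuclideanSpace ℝ (Fin d) := γ ∘ (fun r => max a (min r b)) with hΓ
  have hΓlip : LipschitzWith K Γ := gammaLip hab hlip
  have hΓγ : ∀ r ∈ Icc a b, Γ r = γ r := fun r hr => by simp [hΓ, clampEq hr]
  -- a.e. differentiability of Γ on the open interval
  have hdΓ : ∀ᵐ x, x ∈ Ioo a b → (HasDerivAt Γ (γ' x) x ∧ ‖γ' x‖ = 1) := by
    have h1 : ∀ᵐ x ∂(volume.restrict (Ioo a b)),
        HasDerivAt γ (γ' x) x ∧ ‖γ' x‖ = 1 :=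
      ae_restrict_of_ae_restrict_of_subset Ioo_subset_Icc_self hderiv
    rw [ae_restrict_iff' measurableSet_Ioo] at h1
    filter_upwards [h1] with x hx hmem
    have h2 := hx hmem
    refine ⟨h2.1.congr_of_eventuallyEq ?_, h2.2⟩
    filter_upwards [Ioo_mem_nhds hmem.1 hmem.2] with y hy
    exact hΓγ y (Ioo_subset_Icc_self hy)
  intro s hs t ht hst
  rcases eq_or_ne (γ t) (γ s) with h | h
  · simp [h]; linarith [hs.1, ht.2]
  have hsub : Ioo s t ⊆ Ioo a b := fun y hy => ⟨hs.1.trans_lt hy.1, hy.2.trans_le ht.2⟩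
  set v := γ t - γ s with hv
  have hvne : v ≠ 0 := sub_ne_zero.2 h
  set u := ‖v‖⁻¹ • v with hu
  have hun : ‖u‖ = 1 := norm_smul_inv_norm hvne
  set G : ℝ → ℝ := fun r => ((K : ℝ) + 1) * r - ⟪u, Γ r⟫ with hG
  have hGm : Monotone G := by
    intro r r' hrr
    have h1 : ⟪u, Γ r'⟫ - ⟪u, Γ r⟫ ≤ ((K : ℝ) + 1) * (r' - r) := by
      have h2 : ⟪u, Γ r' - Γ r⟫ ≤ ‖u‖ * ‖Γ r' - Γ r‖ := real_inner_le_norm _ _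
      have h3 : ‖Γ r' - Γ r‖ ≤ K * |r' - r| := by
        have := hΓlip.dist_le_mul r' r
        rwa [dist_eq_norm, Real.dist_eq] at this
      rw [inner_sub_right] at h2
      rw [abs_of_nonneg (by linarith)] at h3
      nlinarith [hun, norm_nonneg (Γ r' - Γ r)]
    simp only [hG]
    nlinarith
  have hGc : Continuous G := by
    apply (continuous_const.mul continuous_id).sub
    exact (innerSL ℝ u).continuous.comp hΓlip.continuous
  have hGd : ∀ᵐ x, x ∈ Ioo s t → HasDerivAt G (((K : ℝ) + 1) - ⟪u, γ' x⟫) x := by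
    filter_upwards [hdΓ] with x hx hmem
    have h2 := hx (hsub hmem)
    have h3 : HasDerivAt (fun r => ⟪u, Γ r⟫) ⟪u, γ' x⟫ x := by
      have := (hasDerivAt_const x u).inner ℝ h2.1
      simpa using this
    have h4 := ((hasDerivAt_id x).const_mul ((K : ℝ) + 1)).sub h3
    simp only [mul_one] at h4
    exact h4
  -- integrability of the inner-product derivative
  have hae : ∀ᵐ x ∂(volume.restrict (Ioc s t)), HasDerivAt Γ (γ' x) x ∧ ‖γ' x‖ = 1 := by
    rw [← Measure.restrict_congr_set Ioo_ae_eq_Ioc, ae_restrict_iff' measurableSet_Ioo]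
    filter_upwards [hdΓ] with x hx hmem
    exact hx (hsub hmem)
  have hγ'm : AEStronglyMeasurable γ' (volume.restrict (Ioc s t)) := by
    apply (measurable_deriv Γ).aestronglyMeasurable.congr
    filter_upwards [hae] with x hx
    exact (hx.1.deriv).symm ▸ rfl
  have hfm : AEStronglyMeasurable (fun x => ⟪u, γ' x⟫) (volume.restrict (Ioc s t)) :=
    (innerSL ℝ u).continuous.comp_aestronglyMeasurable hγ'm
  have hbound : ∀ᵐ x ∂(volume.restrict (Ioc s t)), ‖⟪u, γ' x⟫‖ ≤ 1 := by
    filter_upwards [hae] with x hx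
    calc ‖⟪u, γ' x⟫‖ ≤ ‖u‖ * ‖γ' x‖ := norm_inner_le_norm _ _
      _ = 1 := by rw [hun, hx.2, one_mul]
  have hintOn : IntegrableOn (fun x => ⟪u, γ' x⟫) (Ioc s t) volume :=
    Integrable.mono' (integrable_const 1) hfm hbound
  have hint : IntervalIntegrable (fun x => ⟪u, γ' x⟫) volume s t := by
    rw [intervalIntegrable_iff_integrableOn_Ioc_of_le hst]
    exact hintOn
  have key := lemA hst hGm hGc hGd
  have hsplit : ∫ x in s..t, (((K : ℝ) + 1) - ⟪u, γ' x⟫) =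
      ((K : ℝ) + 1) * (t - s) - ∫ x in s..t, ⟪u, γ' x⟫ := by
    rw [intervalIntegral.integral_sub intervalIntegrable_const hint]
    simp only [intervalIntegral.integral_const, smul_eq_mul]
    ring
  have hGts : G t - G s = ((K : ℝ) + 1) * (t - s) - (⟪u, γ t⟫ - ⟪u, γ s⟫) := by
    simp only [hG, hΓγ s hs, hΓγ t ht]; ring
  have h5 : ⟪u, γ t⟫ - ⟪u, γ s⟫ ≤ ∫ x in s..t, ⟪u, γ' x⟫ := by
    rw [hsplit, hGts] at key; linarith
  have h6 : ∫ x in s..t, ⟪u, γ' x⟫ ≤ t - s := by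
    rw [intervalIntegral.integral_of_le hst]
    calc ∫ x in Ioc s t, ⟪u, γ' x⟫ ≤ ∫ _x in Ioc s t, (1 : ℝ) := by
          apply integral_mono_ae hintOn (integrable_const 1)
          filter_upwards [hbound] with x hx
          exact (le_abs_self _).trans hx
      _ = t - s := by simp [Real.volume_Ioc, ENNReal.toReal_ofReal (by linarith : (0:ℝ) ≤ t - s), hst]
  have h7 : ⟪u, γ t⟫ - ⟪u, γ s⟫ = ‖v‖ := by
    rw [← inner_sub_right, ← hv, hu, real_inner_smul_left,
      real_inner_self_eq_norm_mul_norm]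
    field_simp
  rw [← hv] at *
  linarith [h7 ▸ (h5.trans h6)]

lemma hmSingleton (x : EuclideanSpace ℝ (Fin d)) : μH[1] ({x} : Set (EuclideanSpace ℝ (Fin d))) = 0 := by
  have h : ({x} : Set (EuclideanSpace ℝ (Fin d))) = (fun _ : ℝ => x) '' Icc 0 1 :=
    (Set.Nonempty.image_const (nonempty_Icc.2 zero_le_one) x).symm
  have hlip : LipschitzOnWith 0 (fun _ : ℝ => x) (Icc 0 1) := by
    intro u _ v _; simp
  have := hlip.hausdorffMeasure_image_le (zero_le_one (α := ℝ))
  rw [← h] at this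
  refine le_antisymm (this.trans ?_) (by simp)
  simp

lemma hmAdd (hcont : ContinuousOn γ (Icc a b)) (hinj : InjOn γ (Icc a b))
    {s t : ℝ} (hs : s ∈ Icc a b) (ht : t ∈ Icc a b) (hst : s ≤ t) :
    μH[1] (γ '' Icc a t) = μH[1] (γ '' Icc a s) + μH[1] (γ '' Icc s t) := by
  set A := γ '' Icc a s with hA
  set B := γ '' Icc s t with hB
  have hunion : A ∪ B = γ '' Icc a t := by
    rw [hA, hB, ← image_union, Icc_union_Icc_eq_Icc hs.1 hst]
  have hBmeas : MeasurableSet B :=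
    (isCompact_Icc.image_of_continuousOn (hcont.mono (Icc_subset_Icc hs.1 ht.2))).measurableSet
  have hinter : A ∩ B = {γ s} := by
    apply Set.Subset.antisymm
    · rintro x ⟨⟨r, hr, hrx⟩, ⟨r', hr', hr'x⟩⟩
      have hrIcc : r ∈ Icc a b := ⟨hr.1, hr.2.trans (hst.trans ht.2)⟩
      have hr'Icc : r' ∈ Icc a b := ⟨hs.1.trans hr'.1, hr'.2.trans ht.2⟩
      have : r = r' := hinj hrIcc hr'Icc (hrx.trans hr'x.symm)
      have : r = s := le_antisymm hr.2 (this ▸ hr'.1)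
      simp [← hrx, this]
    · rintro x rfl
      exact ⟨⟨s, ⟨hs.1, le_refl s⟩, rfl⟩, ⟨s, ⟨le_refl s, hst⟩, rfl⟩⟩
  have := measure_union_add_inter (μ := μH[1]) A hBmeas
  rw [hunion, hinter, hmSingleton, add_zero] at this
  exact this

-- upper bound
lemma hmUpper (h1lip : ∀ s ∈ Icc a b, ∀ t ∈ Icc a b, s ≤ t → ‖γ t - γ s‖ ≤ t - s)
    {s t : ℝ} (hs : s ∈ Icc a b) (ht : t ∈ Icc a b) (hst : s ≤ t) :
    μH[1] (γ '' Icc s t) ≤ ENNReal.ofReal (t - s) := by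
  have hsub : Icc s t ⊆ Icc a b := Icc_subset_Icc hs.1 ht.2
  have hlip1 : LipschitzOnWith 1 γ (Icc s t) := by
    rw [lipschitzOnWith_iff_dist_le_mul]
    intro x hx y hy
    rcases le_total y x with hxy | hxy
    · rw [dist_eq_norm, Real.dist_eq, abs_of_nonneg (by linarith)]
      simpa using h1lip y (hsub hy) x (hsub hx) hxy
    · rw [dist_eq_norm, Real.dist_eq, abs_of_nonpos (by linarith), ← norm_neg]
      simpa [neg_sub] using h1lip x (hsub hx) y (hsub hy) hxy
  calc μH[1] (γ '' Icc s t) ≤ (1 : NNReal) ^ (1:ℝ) * μH[1] (Icc s t) :=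
        hlip1.hausdorffMeasure_image_le zero_le_one
    _ = volume (Icc s t) := by
        rw [← MeasureTheory.hausdorffMeasure_real]; simp
    _ = ENNReal.ofReal (t - s) := Real.volume_Icc

-- lower bound by chord length
lemma hmLower (hcont : ContinuousOn γ (Icc a b))
    {s t : ℝ} (hs : s ∈ Icc a b) (ht : t ∈ Icc a b) (hst : s ≤ t) :
    ENNReal.ofReal ‖γ t - γ s‖ ≤ μH[1] (γ '' Icc s t) := by
  rcases eq_or_ne (γ t) (γ s) with h | h
  · simp [h]
  set v := γ t - γ s with hv
  have hvne : v ≠ 0 := sub_ne_zero.2 h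
  set u := ‖v‖⁻¹ • v with hu
  have hun : ‖u‖ = 1 := norm_smul_inv_norm hvne
  set p : EuclideanSpace ℝ (Fin d) →L[ℝ] ℝ := innerSL ℝ u with hp
  have hplip : LipschitzWith 1 p := by
    apply p.lipschitz.weaken
    rw [← NNReal.coe_le_coe, coe_nnnorm, innerSL_apply_norm, hun]
    norm_num
  have hpsub : Icc (p (γ s)) (p (γ t)) ⊆ p '' (γ '' Icc s t) := by
    rw [← image_comp]
    exact intermediate_value_Icc hst
      (p.continuous.comp_continuousOn (hcont.mono (Icc_subset_Icc hs.1 ht.2)))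
  have hval : p (γ t) - p (γ s) = ‖v‖ := by
    have : p (γ t) - p (γ s) = ⟪u, v⟫ := by
      simp [hp, hv, inner_sub_right]
    rw [this, hu, real_inner_smul_left, real_inner_self_eq_norm_mul_norm]
    field_simp
  calc ENNReal.ofReal ‖v‖ = volume (Icc (p (γ s)) (p (γ t))) := by
        rw [Real.volume_Icc, hval]
    _ = μH[1] (Icc (p (γ s)) (p (γ t))) := by rw [MeasureTheory.hausdorffMeasure_real]
    _ ≤ μH[1] (p '' (γ '' Icc s t)) := measure_mono hpsub
    _ ≤ (1 : NNReal) ^ (1:ℝ) * μH[1] (γ '' Icc s t) :=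
        hplip.hausdorffMeasure_image_le zero_le_one _
    _ = μH[1] (γ '' Icc s t) := by simp

lemma hmTotal (hab : a ≤ b) (hcont : ContinuousOn γ (Icc a b)) (hinj : InjOn γ (Icc a b))
    (h1lip : ∀ s ∈ Icc a b, ∀ t ∈ Icc a b, s ≤ t → ‖γ t - γ s‖ ≤ t - s)
    (hdγ : ∀ᵐ x, x ∈ Ioo a b → (HasDerivAt γ (γ' x) x ∧ ‖γ' x‖ = 1)) :
    μH[1] (γ '' Icc a b) = ENNReal.ofReal (b - a) := by
  have haI : a ∈ Icc a b := ⟨le_refl a, hab⟩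
  have hbI : b ∈ Icc a b := ⟨hab, le_refl b⟩
  set c : ℝ → ℝ := fun r => max a (min r b) with hc
  have hcmem : ∀ r, c r ∈ Icc a b := fun r => ⟨le_max_left _ _, max_le hab (min_le_right _ _)⟩
  have hceq : ∀ {r}, r ∈ Icc a b → c r = r := fun {r} hr => by
    simp only [hc]; rw [min_eq_left hr.2, max_eq_right hr.1]
  have hcmono : Monotone c := fun r r' h =>
    max_le_max (le_refl a) (min_le_min h (le_refl b))
  have hfin : ∀ {s t : ℝ}, s ∈ Icc a b → t ∈ Icc a b → s ≤ t → μH[1] (γ '' Icc s t) ≠ ⊤ :=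
    fun {s t} hs ht hst => ((hmUpper h1lip hs ht hst).trans_lt ENNReal.ofReal_lt_top).ne
  set F : ℝ → ℝ := fun r => (μH[1] (γ '' Icc a (c r))).toReal with hF
  have hFdiff : ∀ {s t : ℝ}, s ∈ Icc a b → t ∈ Icc a b → s ≤ t →
      F t - F s = (μH[1] (γ '' Icc s t)).toReal := by
    intro s t hs ht hst
    have hadd := hmAdd hcont hinj hs ht hst
    simp only [hF, hceq hs, hceq ht]
    rw [hadd, ENNReal.toReal_add (hfin haI hs hs.1) (hfin hs ht hst)]
    ring
  have hFc : ∀ r, F (c r) = F r := by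
    intro r
    simp only [hF]
    rw [hceq (hcmem r)]
  have hFmono : Monotone F := by
    intro r r' h
    have h1 := hFdiff (hcmem r) (hcmem r') (hcmono h)
    rw [hFc, hFc] at h1
    have := ENNReal.toReal_nonneg (a := μH[1] (γ '' Icc (c r) (c r')))
    linarith
  have hFlip : ∀ r r' : ℝ, r ≤ r' → F r' - F r ≤ r' - r := by
    intro r r' h
    have h1 := hFdiff (hcmem r) (hcmem r') (hcmono h)
    rw [hFc, hFc] at h1
    have h2 : (μH[1] (γ '' Icc (c r) (c r'))).toReal ≤ c r' - c r := by
      have := hmUpper h1lip (hcmem r) (hcmem r') (hcmono h)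
      calc (μH[1] (γ '' Icc (c r) (c r'))).toReal
          ≤ (ENNReal.ofReal (c r' - c r)).toReal :=
            ENNReal.toReal_mono ENNReal.ofReal_ne_top this
        _ = c r' - c r := ENNReal.toReal_ofReal (sub_nonneg.2 (hcmono h))
    have h3 : c r' - c r ≤ r' - r := by
      have := (LipschitzWith.of_dist_le_mul (K := 1) (f := c) (by
        intro x y
        simp only [Real.dist_eq, NNReal.coe_one, one_mul, hc]
        calc |max a (min x b) - max a (min y b)| ≤ |min x b - min y b| := by
              rw [max_comm a, max_comm a]; exact abs_max_sub_max_le_abs _ _ _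
          _ ≤ max |x - y| |b - b| := abs_min_sub_min_le_max _ _ _ _
          _ = |x - y| := by simp)).dist_le_mul r' r
      rw [Real.dist_eq, Real.dist_eq] at this
      have h4 : c r' - c r ≤ |c r' - c r| := le_abs_self _
      have h5 : |r' - r| = r' - r := abs_of_nonneg (by linarith)
      simp only [NNReal.coe_one, one_mul] at this
      linarith
    linarith
  have hFlipW : LipschitzWith 1 F := by
    apply LipschitzWith.of_dist_le_mul
    intro x y
    simp only [Real.dist_eq, NNReal.coe_one, one_mul]
    rcases le_total x y with h | h
    · have h1 := hFlip x y h
      have h2 := hFmono h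
      rw [abs_of_nonpos (by linarith), abs_of_nonpos (by linarith)]
      linarith
    · have h1 := hFlip y x h
      have h2 := hFmono h
      rw [abs_of_nonneg (by linarith), abs_of_nonneg (by linarith)]
      linarith
  have hFcont : Continuous F := hFlipW.continuous
  have hchord : ∀ {s t : ℝ}, s ∈ Icc a b → t ∈ Icc a b → s ≤ t →
      ‖γ t - γ s‖ ≤ F t - F s := by
    intro s t hs ht hst
    rw [hFdiff hs ht hst]
    have h1 := hmLower hcont hs ht hst
    calc ‖γ t - γ s‖ = (ENNReal.ofReal ‖γ t - γ s‖).toReal :=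
          (ENNReal.toReal_ofReal (norm_nonneg _)).symm
      _ ≤ (μH[1] (γ '' Icc s t)).toReal := ENNReal.toReal_mono (hfin hs ht hst) h1
  -- the Stieltjes measure of F
  set ν := hFmono.stieltjesFunction.measure with hν
  have hFeq : ∀ x, hFmono.stieltjesFunction x = F x := by
    intro x
    rw [hFmono.stieltjesFunction_eq]
    exact rightLim_eq_of_tendsto
      ((hFcont.tendsto x).mono_left nhdsWithin_le_nhds)
  have hone : ∀ᵐ x, x ∈ Ioo a b → 1 ≤ ν.rnDeriv volume x := by
    filter_upwards [hFmono.ae_hasDerivAt, hdγ] with x hDx hγx hmem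
    have hγ2 := hγx hmem
    set D := (ν.rnDeriv volume x).toReal with hD
    -- slopes
    have hslopeF : Tendsto (slope F x) (𝓝[≠] x) (𝓝 D) := by
      rw [hasDerivAt_iff_tendsto_slope] at hDx
      exact hDx
    have hslopeγ : Tendsto (fun y => ‖slope γ x y‖) (𝓝[≠] x) (𝓝 1) := by
      rw [hasDerivAt_iff_tendsto_slope] at hγ2
      have := (continuous_norm.tendsto (γ' x)).comp hγ2.1
      rwa [hγ2.2] at this
    have hev : ∀ᶠ y in 𝓝[≠] x, ‖slope γ x y‖ ≤ slope F x y := by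
      filter_upwards [mem_nhdsWithin_of_mem_nhds (Ioo_mem_nhds hmem.1 hmem.2),
        self_mem_nhdsWithin] with y hy hyne
      have hyne' : y ≠ x := hyne
      have hyI : y ∈ Icc a b := Ioo_subset_Icc_self hy
      have hxI : x ∈ Icc a b := Ioo_subset_Icc_self hmem
      rcases hyne'.lt_or_gt with hlt | hlt
      · -- y < x
        have h1 := hchord hyI hxI hlt.le
        have h2 : slope F x y = (F x - F y) / (x - y) := by
          rw [slope_def_field, ← neg_sub (F x) (F y), ← neg_sub x y, neg_div_neg_eq]
        have h3 : ‖slope γ x y‖ = ‖γ x - γ y‖ / (x - y) := by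
          rw [slope_def_module, norm_smul, norm_inv, Real.norm_eq_abs,
            abs_of_neg (by linarith : y - x < 0), norm_sub_rev, neg_sub,
            div_eq_inv_mul]
        rw [h2, h3]
        gcongr
      · -- x < y
        have h1 := hchord hxI hyI hlt.le
        have h2 : slope F x y = (F y - F x) / (y - x) := slope_def_field F x y
        have h3 : ‖slope γ x y‖ = ‖γ y - γ x‖ / (y - x) := by
          rw [slope_def_module, norm_smul, norm_inv, Real.norm_eq_abs,
            abs_of_pos (by linarith : (0:ℝ) < y - x), div_eq_inv_mul]
        rw [h2, h3]
        gcongr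
    have h1le : (1:ℝ) ≤ D := le_of_tendsto_of_tendsto hslopeγ hslopeF hev
    by_cases htop : ν.rnDeriv volume x = ⊤
    · rw [htop]; exact le_top
    · rw [← ENNReal.ofReal_one]
      exact ENNReal.ofReal_le_of_le_toReal h1le
  -- lower bound on total mass
  have hlow : ENNReal.ofReal (b - a) ≤ ENNReal.ofReal (F b - F a) := by
    have h1 : ENNReal.ofReal (b - a) = ∫⁻ _x in Ioo a b, (1:ℝ≥0∞) ∂volume := by
      rw [setLIntegral_one, Real.volume_Ioo]
    have h2 : (∫⁻ x in Ioo a b, (1:ℝ≥0∞) ∂volume) ≤ ∫⁻ x in Ioo a b, ν.rnDeriv volume x ∂volume := by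
      apply lintegral_mono_ae
      rw [ae_restrict_iff' measurableSet_Ioo]
      filter_upwards [hone] with x hx hmem
      exact hx hmem
    have h3 : (∫⁻ x in Ioo a b, ν.rnDeriv volume x ∂volume) ≤ ν (Ioo a b) :=
      Measure.setLIntegral_rnDeriv_le _
    have h4 : ν (Ioo a b) ≤ ν (Ioc a b) := measure_mono Ioo_subset_Ioc_self
    have h5 : ν (Ioc a b) = ENNReal.ofReal (F b - F a) := by
      rw [hν, StieltjesFunction.measure_Ioc, hFeq, hFeq]
    rw [h1]
    exact (h2.trans h3).trans (h4.trans_eq h5)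
  have hFa : F a = 0 := by
    have h1 := hmUpper h1lip haI haI (le_refl a)
    simp only [sub_self, ENNReal.ofReal_zero, nonpos_iff_eq_zero] at h1
    rw [Icc_self, image_singleton] at h1
    simp [hF, hceq haI, Icc_self, image_singleton, h1]
  have hFb : F b = (μH[1] (γ '' Icc a b)).toReal := by simp [hF, hceq hbI]
  rw [hFa, sub_zero, hFb] at hlow
  refine le_antisymm (hmUpper h1lip haI hbI hab) ?_
  calc ENNReal.ofReal (b - a) ≤ ENNReal.ofReal ((μH[1] (γ '' Icc a b)).toReal) := hlow
    _ = μH[1] (γ '' Icc a b) := ENNReal.ofReal_toReal (hfin haI hbI hab)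

lemma measEq {Γ : ℝ → EuclideanSpace ℝ (Fin d)} (hab : a ≤ b)
    (hΓcont : Continuous Γ)
    (hΓlip1 : LipschitzOnWith 1 Γ (Icc a b))
    (htot : μH[1] (Γ '' Icc a b) = ENNReal.ofReal (b - a)) :
    μH[1].restrict (Γ '' Icc a b) = Measure.map Γ (volume.restrict (Icc a b)) := by
  set T := Γ '' Icc a b with hT
  set m := Measure.map Γ (volume.restrict (Icc a b)) with hm
  have hTmeas : MeasurableSet T :=
    (isCompact_Icc.image hΓcont).measurableSet
  have hle : ∀ s : Set (EuclideanSpace ℝ (Fin d)), MeasurableSet s →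
      μH[1].restrict T s ≤ m s := by
    intro s hs
    rw [Measure.restrict_apply hs, hm,
      Measure.map_apply hΓcont.measurable hs,
      Measure.restrict_apply (hΓcont.measurable hs)]
    have himg : s ∩ T = Γ '' (Γ ⁻¹' s ∩ Icc a b) := by
      rw [image_preimage_inter]
    rw [himg]
    calc μH[1] (Γ '' (Γ ⁻¹' s ∩ Icc a b))
        ≤ (1 : NNReal) ^ (1:ℝ) * μH[1] (Γ ⁻¹' s ∩ Icc a b) :=
          (hΓlip1.mono inter_subset_right).hausdorffMeasure_image_le zero_le_one
      _ = volume (Γ ⁻¹' s ∩ Icc a b) := by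
          rw [← MeasureTheory.hausdorffMeasure_real]; simp
  have huniv : μH[1].restrict T univ = m univ := by
    rw [Measure.restrict_apply_univ, htot, hm,
      Measure.map_apply hΓcont.measurable MeasurableSet.univ]
    simp [Real.volume_Icc]
  have hfin : μH[1].restrict T univ ≠ ⊤ := by
    rw [Measure.restrict_apply_univ, htot]; exact ENNReal.ofReal_ne_top
  have hmfin : m univ ≠ ⊤ := huniv ▸ hfin
  ext s hs
  have h1 := hle s hs
  have h2 := hle sᶜ hs.compl
  have h3 : μH[1].restrict T s + μH[1].restrict T sᶜ = μH[1].restrict T univ :=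
    measure_add_measure_compl hs
  have h4 : m s + m sᶜ = m univ := measure_add_measure_compl hs
  have fs1 : μH[1].restrict T s ≠ ⊤ :=
    ne_top_of_le_ne_top hfin (measure_mono (subset_univ _))
  have fs2 : μH[1].restrict T sᶜ ≠ ⊤ :=
    ne_top_of_le_ne_top hfin (measure_mono (subset_univ _))
  have fm1 : m s ≠ ⊤ := ne_top_of_le_ne_top hmfin (measure_mono (subset_univ _))
  have fm2 : m sᶜ ≠ ⊤ := ne_top_of_le_ne_top hmfin (measure_mono (subset_univ _))
  rw [← ENNReal.toReal_eq_toReal_iff' fs1 fm1]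
  have e3 := congrArg ENNReal.toReal h3
  have e4 := congrArg ENNReal.toReal h4
  rw [ENNReal.toReal_add fs1 fs2] at e3
  rw [ENNReal.toReal_add fm1 fm2] at e4
  have e5 := congrArg ENNReal.toReal huniv
  have i1 := ENNReal.toReal_mono fm1 h1
  have i2 := ENNReal.toReal_mono fm2 h2
  linarith

lemma exists_inv {Γ : ℝ → EuclideanSpace ℝ (Fin d)} (hΓcont : Continuous Γ)
    (hΓinj : InjOn Γ (Icc a b)) :
    ∃ inv : EuclideanSpace ℝ (Fin d) → ℝ, ContinuousOn inv (Γ '' Icc a b) ∧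
      ∀ t ∈ Icc a b, inv (Γ t) = t := by
  haveI : CompactSpace (Icc a b) := isCompact_iff_compactSpace.mp isCompact_Icc
  set T := Γ '' Icc a b with hT
  have hmap : ∀ t : Icc a b, Γ t ∈ T := fun t => mem_image_of_mem _ t.2
  set e : Icc a b → T := fun t => ⟨Γ (t : ℝ), hmap t⟩ with he'
  have he : Continuous e :=
    Continuous.subtype_mk (hΓcont.comp continuous_subtype_val) _
  have hbij : Function.Bijective e := by
    constructor
    · intro x y hxy
      exact Subtype.ext (hΓinj x.2 y.2 (congrArg Subtype.val hxy))
    · rintro ⟨x, t, ht, rfl⟩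
      exact ⟨⟨t, ht⟩, rfl⟩
  set E := Equiv.ofBijective e hbij with hE'
  have hE : Continuous E := he
  let H := hE.homeoOfEquivCompactToT2
  have hHe : ∀ t : Icc a b, H t = e t := fun _ => rfl
  refine ⟨fun x => if h : x ∈ T then ((H.symm ⟨x, h⟩ : Icc a b) : ℝ) else a, ?_, ?_⟩
  · rw [continuousOn_iff_continuous_restrict]
    have heq : (T.domRestrict fun x =>
        if h : x ∈ T then ((H.symm ⟨x, h⟩ : Icc a b) : ℝ) else a)
        = fun y : T => ((H.symm y : Icc a b) : ℝ) := by
      funext y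
      simp only [domRestrict_apply, y.2, dif_pos]
    rw [heq]
    exact continuous_subtype_val.comp H.symm.continuous
  · intro t ht
    dsimp only
    rw [dif_pos (show Γ t ∈ T from mem_image_of_mem Γ ht)]
    have h1 : H ⟨t, ht⟩ = ⟨Γ t, mem_image_of_mem Γ ht⟩ := rfl
    rw [← h1, Homeomorph.symm_apply_apply]

end Aux



/-- For an injective arclength-parametrized Lipschitz curve `γ : [a,b] → ℝ^d`, the induced
vector measure `z_γ` satisfies `|z_γ| = H¹ ⌞ Im γ` and `z_γ = τ · H¹ ⌞ Im γ` for the unit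
tangent field `τ` with `τ(γ(t)) = γ'(t)`, both equalities tested against continuous
compactly supported functions. -/
theorem stmt15 {d : ℕ} (a b : ℝ) (hab : a ≤ b)
    (γ γ' : ℝ → EuclideanSpace ℝ (Fin d)) (K : NNReal)
    (hlip : LipschitzOnWith K γ (Set.Icc a b))
    (hinj : Set.InjOn γ (Set.Icc a b))
    (hderiv : ∀ᵐ t ∂(volume.restrict (Set.Icc a b)),
      HasDerivAt γ (γ' t) t ∧ ‖γ' t‖ = 1) :
    ∃ τ : EuclideanSpace ℝ (Fin d) → EuclideanSpace ℝ (Fin d),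
      (∀ᵐ t ∂(volume.restrict (Set.Icc a b)), τ (γ t) = γ' t) ∧
      (∀ φ : EuclideanSpace ℝ (Fin d) → ℝ, Continuous φ → HasCompactSupport φ →
        ∫ t in a..b, φ (γ t) =
          ∫ x, φ x ∂((Measure.hausdorffMeasure 1 :
            Measure (EuclideanSpace ℝ (Fin d))).restrict (γ '' Set.Icc a b))) ∧
      (∀ φ : EuclideanSpace ℝ (Fin d) → EuclideanSpace ℝ (Fin d),
        Continuous φ → HasCompactSupport φ →
        ∫ t in a..b, ⟪φ (γ t), γ' t⟫ =
          ∫ x, ⟪φ x, τ x⟫ ∂((Measure.hausdorffMeasure 1 :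
            Measure (EuclideanSpace ℝ (Fin d))).restrict (γ '' Set.Icc a b))) := by
  classical
  set Γ : ℝ → EuclideanSpace ℝ (Fin d) := γ ∘ (fun r => max a (min r b)) with hΓdef
  have hΓlip : LipschitzWith K Γ := gammaLip hab hlip
  have hΓcont : Continuous Γ := hΓlip.continuous
  have hΓγ : ∀ r ∈ Icc a b, Γ r = γ r := fun r hr => by simp [hΓdef, clampEq hr]
  have hγcont : ContinuousOn γ (Icc a b) := hlip.continuousOn
  have h1lip : ∀ s ∈ Icc a b, ∀ t ∈ Icc a b, s ≤ t → ‖γ t - γ s‖ ≤ t - s :=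
    oneLip hab hlip hderiv
  -- global a.e. differentiability statements
  have hdγ : ∀ᵐ x, x ∈ Ioo a b → (HasDerivAt γ (γ' x) x ∧ ‖γ' x‖ = 1) := by
    have h1 : ∀ᵐ x ∂(volume.restrict (Ioo a b)),
        HasDerivAt γ (γ' x) x ∧ ‖γ' x‖ = 1 :=
      ae_restrict_of_ae_restrict_of_subset Ioo_subset_Icc_self hderiv
    rwa [ae_restrict_iff' measurableSet_Ioo] at h1
  -- image identification
  have himg : γ '' Icc a b = Γ '' Icc a b :=
    (image_congr (fun r hr => (hΓγ r hr).symm))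
  set T : Set (EuclideanSpace ℝ (Fin d)) := γ '' Icc a b with hTdef
  have hTmeas : MeasurableSet T := by
    rw [himg]
    exact (isCompact_Icc.image hΓcont).measurableSet
  -- total mass
  have htot : μH[1] T = ENNReal.ofReal (b - a) :=
    hmTotal hab hγcont hinj h1lip hdγ
  -- Lipschitz-1 for Γ on the interval
  have hΓlip1 : LipschitzOnWith 1 Γ (Icc a b) := by
    rw [lipschitzOnWith_iff_dist_le_mul]
    intro x hx y hy
    rw [hΓγ x hx, hΓγ y hy]
    rcases le_total y x with hxy | hxy
    · rw [dist_eq_norm, Real.dist_eq, abs_of_nonneg (by linarith)]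
      simpa using h1lip y hy x hx hxy
    · rw [dist_eq_norm, Real.dist_eq, abs_of_nonpos (by linarith), ← norm_neg]
      simpa [neg_sub] using h1lip x hx y hy hxy
  -- the measure identification
  have key : μH[1].restrict T = Measure.map Γ (volume.restrict (Icc a b)) := by
    rw [himg]
    exact measEq hab hΓcont hΓlip1 (by rw [← himg]; exact htot)
  -- the inverse function
  have hΓinj : InjOn Γ (Icc a b) := by
    intro x hx y hy hxy
    rw [hΓγ x hx, hΓγ y hy] at hxy
    exact hinj hx hy hxy
  obtain ⟨inv, hinvc, hinve⟩ := exists_inv hΓcont hΓinj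
  set τ : EuclideanSpace ℝ (Fin d) → EuclideanSpace ℝ (Fin d) :=
    fun x => deriv Γ (inv x) with hτdef
  -- a.e. membership in the open interval
  have hIoo_ae : ∀ᵐ t ∂(volume.restrict (Icc a b)), t ∈ Ioo a b := by
    rw [← Measure.restrict_congr_set Ioo_ae_eq_Icc]
    exact ae_restrict_mem measurableSet_Ioo
  -- bullet 1
  have hb1 : ∀ᵐ t ∂(volume.restrict (Set.Icc a b)), τ (γ t) = γ' t := by
    filter_upwards [hIoo_ae, hderiv] with t ht hd
    have htI : t ∈ Icc a b := Ioo_subset_Icc_self ht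
    have hΓd : HasDerivAt Γ (γ' t) t := by
      apply hd.1.congr_of_eventuallyEq
      filter_upwards [Ioo_mem_nhds ht.1 ht.2] with y hy
      exact hΓγ y (Ioo_subset_Icc_self hy)
    have h2 : γ t = Γ t := (hΓγ t htI).symm
    rw [hτdef]
    simp only
    rw [h2, hinve t htI, hΓd.deriv]
  -- measurability of τ w.r.t. the restricted Hausdorff measure
  have hτae : AEMeasurable τ (μH[1].restrict T) := by
    have hinvae : AEMeasurable inv (μH[1].restrict T) := by
      apply ContinuousOn.aemeasurable _ hTmeas
      rw [himg]
      exact hinvc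
    exact (measurable_deriv Γ).comp_aemeasurable hinvae
  refine ⟨τ, hb1, ?_, ?_⟩
  · -- second bullet
    intro φ hφc _
    rw [key, integral_map hΓcont.aemeasurable hφc.aestronglyMeasurable]
    have h1 : ∫ t, φ (Γ t) ∂(volume.restrict (Icc a b))
        = ∫ t in Icc a b, φ (γ t) := by
      apply integral_congr_ae
      filter_upwards [ae_restrict_mem measurableSet_Icc] with t ht
      rw [hΓγ t ht]
    rw [h1, intervalIntegral.integral_of_le hab, ← integral_Icc_eq_integral_Ioc]
  · -- third bullet
    intro φ hφc _
    have hmeas : AEStronglyMeasurable (fun x => ⟪φ x, τ x⟫) (μH[1].restrict T) :=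
      (hφc.aestronglyMeasurable).inner hτae.aestronglyMeasurable
    rw [key] at hmeas ⊢
    rw [integral_map hΓcont.aemeasurable hmeas]
    have h1 : ∫ t, ⟪φ (Γ t), τ (Γ t)⟫ ∂(volume.restrict (Icc a b))
        = ∫ t in Icc a b, ⟪φ (γ t), γ' t⟫ := by
      apply integral_congr_ae
      filter_upwards [ae_restrict_mem measurableSet_Icc, hb1] with t ht h2
      rw [hΓγ t ht, h2]
    rw [h1, intervalIntegral.integral_of_le hab, ← integral_Icc_eq_integral_Ioc]
end
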